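/- Let V and E be finite types with source and range maps s, r : E → V and an involution γ ↦ γ̃ on E satisfying s(γ̃) = r(γ) and r(γ̃) = s(γ), let φ : V → ℝ be strictly positive, fix a base vertex * ∈ V, and suppose β ∈ ℝ satisfies the Perron–Frobenius eigenvalue equation Σ_{γ ∈ E, s(γ) = v} φ(r(γ)) = β·φ(v) for every v ∈ V. With Path_m, the cup matrices M_{∪^{(i)}} and the cap matrices M_{∩^{(i)}} = (M_{∪^{(i)}})ᵀ defined as in the cup–cap setting, one has M_{∪^{(i)}} · M_{∩^{(i)}} = β·1, the scalar β times the identity matrix on Path_m; i.e. a closed loop evaluates to the Perron–Frobenius eigenvalue β (which is [3] for an SU(3) ADE graph). -/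

import Mathlib

open Matrix

/-- Paths of length `n` on a graph with edge set `E`, source/range maps `s, r`,
starting at the base vertex `v₀`. -/
abbrev GraphPath {V E : Type*} (s r : E → V) (v₀ : V) (n : ℕ) : Type _ :=
  {γ : Fin n → E //
    (∀ hn : 0 < n, s (γ ⟨0, hn⟩) = v₀) ∧
    ∀ (k : ℕ) (hk : k + 1 < n), s (γ ⟨k + 1, hk⟩) = r (γ ⟨k, Nat.lt_of_succ_lt hk⟩)}

private theorem path_step {V E : Type*} {s r : E → V} {v₀ : V} {n : ℕ}
    (b : GraphPath s r v₀ n) {j j' : ℕ} (hj : j < n) (hj' : j' < n) (h : j' = j + 1) :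
    s (b.1 ⟨j', hj'⟩) = r (b.1 ⟨j, hj⟩) := by
  subst h; exact b.2.2 j hj'

private theorem path_congr {V E : Type*} {s r : E → V} {v₀ : V} {n : ℕ}
    (b : GraphPath s r v₀ n) {j j' : ℕ} (hj : j < n) (hj' : j' < n) (h : j = j') :
    b.1 ⟨j, hj⟩ = b.1 ⟨j', hj'⟩ := by
  subst h; rfl

/-- The path obtained from `a` by inserting the edge `γ` followed by `rev γ` at position `i`
(as a function on natural-number indices). -/
private def insEdge {E : Type*} (i m : ℕ) (a : Fin m → E) (rev : E → E) (γ : E) : ℕ → E :=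
  fun j =>
    if h1 : j + 1 < i ∧ j < m then a ⟨j, h1.2⟩
    else if j = i - 1 then γ
    else if j = i then rev γ
    else if h4 : j - 2 < m then a ⟨j - 2, h4⟩
    else γ

private theorem insEdge_lt {E : Type*} {i m : ℕ} (a : Fin m → E) (rev : E → E) (γ : E)
    {j : ℕ} (h : j + 1 < i) (h' : j < m) : insEdge i m a rev γ j = a ⟨j, h'⟩ := by
  simp only [insEdge]
  rw [dif_pos ⟨h, h'⟩]

private theorem insEdge_cup {E : Type*} {i m : ℕ} (a : Fin m → E) (rev : E → E) (γ : E)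
    {j : ℕ} (h : j + 1 = i) : insEdge i m a rev γ j = γ := by
  simp only [insEdge]
  rw [dif_neg (by omega), if_pos (by omega)]

private theorem insEdge_cap {E : Type*} {i m : ℕ} (a : Fin m → E) (rev : E → E) (γ : E)
    {j : ℕ} (hi : 1 ≤ i) (h : j = i) : insEdge i m a rev γ j = rev γ := by
  simp only [insEdge]
  rw [dif_neg (by omega), if_neg (by omega), if_pos h]

private theorem insEdge_ge {E : Type*} {i m : ℕ} (a : Fin m → E) (rev : E → E) (γ : E)
    {j : ℕ} (h : i + 1 ≤ j) (h' : j - 2 < m) : insEdge i m a rev γ j = a ⟨j - 2, h'⟩ := by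
  simp only [insEdge]
  rw [dif_neg (by omega), if_neg (by omega), if_neg (by omega), dif_pos h']

/-- The property that `b` is obtained from `a` by inserting an edge followed by its reverse
at position `i` (matching the hypothesis `hM` of the main theorem). -/
private def InsProp {V E : Type*} (s r : E → V) (v₀ : V) (rev : E → E) (m i : ℕ)
    (hi1 : 1 ≤ i) (hi2 : i ≤ m + 1)
    (a : GraphPath s r v₀ m) (b : GraphPath s r v₀ (m + 2)) : Prop :=
  (∀ k : Fin m, (k : ℕ) + 1 < i → b.1 (Fin.castLE (Nat.le_add_right m 2) k) = a.1 k) ∧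
  b.1 ⟨i, Nat.lt_succ_of_le hi2⟩ = rev (b.1 ⟨i - 1, Nat.lt_of_le_of_lt (Nat.sub_le i 1) (Nat.lt_succ_of_le hi2)⟩) ∧
  (∀ k : Fin m, i ≤ (k : ℕ) + 1 → b.1 ⟨(k : ℕ) + 2, Nat.add_lt_add_right k.isLt 2⟩ = a.1 k)

/-- a closed loop evaluates to the Perron–Frobenius eigenvalue:
`M_{∪^{(i)}} · M_{∩^{(i)}} = β · 1`, where `M_{∩^{(i)}} = M_{∪^{(i)}}ᵀ`. -/
theorem closed_loop_eq_PF_eigenvalue {V E : Type*} [Fintype V] [Fintype E] [DecidableEq V]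
    (s r : E → V) (rev : E → E)
    (hrev : ∀ γ, rev (rev γ) = γ)
    (hsrev : ∀ γ, s (rev γ) = r γ) (hrrev : ∀ γ, r (rev γ) = s γ)
    (φ : V → ℝ) (hφ : ∀ v, 0 < φ v) (v₀ : V) (β : ℝ)
    (hPF : ∀ v : V, ∑ γ ∈ Finset.univ.filter (fun γ => s γ = v), φ (r γ) = β * φ v)
    (m : ℕ)
    [Fintype (GraphPath s r v₀ m)] [Fintype (GraphPath s r v₀ (m + 2))]
    [DecidableEq (GraphPath s r v₀ m)]
    (Mcup : ℕ → Matrix (GraphPath s r v₀ m) (GraphPath s r v₀ (m + 2)) ℝ)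
    (hM : ∀ (i : ℕ) (hi1 : 1 ≤ i) (hi2 : i ≤ m + 1)
        (α : GraphPath s r v₀ m) (β' : GraphPath s r v₀ (m + 2)),
      (((∀ k : Fin m, (k : ℕ) + 1 < i → β'.1 (Fin.castLE (by omega) k) = α.1 k) ∧
        β'.1 ⟨i, by omega⟩ = rev (β'.1 ⟨i - 1, by omega⟩) ∧
        (∀ k : Fin m, i ≤ (k : ℕ) + 1 → β'.1 ⟨(k : ℕ) + 2, by omega⟩ = α.1 k)) →
          Mcup i α β' =
            Real.sqrt (φ (r (β'.1 ⟨i - 1, by omega⟩)) / φ (s (β'.1 ⟨i - 1, by omega⟩)))) ∧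
      (¬ ((∀ k : Fin m, (k : ℕ) + 1 < i → β'.1 (Fin.castLE (by omega) k) = α.1 k) ∧
          β'.1 ⟨i, by omega⟩ = rev (β'.1 ⟨i - 1, by omega⟩) ∧
          (∀ k : Fin m, i ≤ (k : ℕ) + 1 → β'.1 ⟨(k : ℕ) + 2, by omega⟩ = α.1 k)) →
            Mcup i α β' = 0)) :
    ∀ (i : ℕ), 1 ≤ i → i ≤ m + 1 →
      Mcup i * (Mcup i)ᵀ = β • (1 : Matrix (GraphPath s r v₀ m) (GraphPath s r v₀ m) ℝ) := by
  intro i hi1 hi2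
  classical
  have key := hM i hi1 hi2
  -- the vertex at which the edge is inserted determines everything
  have hdet : ∀ (a a' : GraphPath s r v₀ m) (b : GraphPath s r v₀ (m + 2)),
      InsProp s r v₀ rev m i hi1 hi2 a b → InsProp s r v₀ rev m i hi1 hi2 a' b → a = a' := by
    intro a a' b h h'
    apply Subtype.ext; funext k
    rcases lt_or_ge ((k : ℕ) + 1) i with hk | hk
    · exact (h.1 k hk).symm.trans (h'.1 k hk)
    · exact (h.2.2 k hk).symm.trans (h'.2.2 k hk)
  -- the source of the inserted edge
  have hedge : ∀ (a : GraphPath s r v₀ m) (b : GraphPath s r v₀ (m + 2)),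
      InsProp s r v₀ rev m i hi1 hi2 a b →
      s (b.1 ⟨i - 1, by omega⟩) = (if h : 2 ≤ i then r (a.1 ⟨i - 2, by omega⟩) else v₀) := by
    intro a b hb
    by_cases h2 : 2 ≤ i
    · rw [dif_pos h2]
      have e1 : s (b.1 ⟨i - 1, by omega⟩) = r (b.1 ⟨i - 2, by omega⟩) :=
        path_step b (by omega) (by omega) (by omega)
      have e2 : b.1 ⟨i - 2, by omega⟩ = a.1 ⟨i - 2, by omega⟩ :=
        hb.1 ⟨i - 2, by omega⟩ (show i - 2 + 1 < i by omega)
      rw [e1, e2]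
    · obtain rfl : i = 1 := by omega
      rw [dif_neg h2]
      exact b.2.1 (by omega)
  -- a path `b` with the given inserted edge is uniquely determined
  have huniq : ∀ (a : GraphPath s r v₀ m) (b1 b2 : GraphPath s r v₀ (m + 2)),
      InsProp s r v₀ rev m i hi1 hi2 a b1 → InsProp s r v₀ rev m i hi1 hi2 a b2 →
      b1.1 ⟨i - 1, by omega⟩ = b2.1 ⟨i - 1, by omega⟩ → b1 = b2 := by
    intro a b1 b2 h1 h2 he
    apply Subtype.ext; funext j
    rcases lt_or_ge ((j : ℕ) + 1) i with hj | hj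
    · exact (h1.1 ⟨(j : ℕ), by omega⟩ hj).trans (h2.1 ⟨(j : ℕ), by omega⟩ hj).symm
    · by_cases hj2 : (j : ℕ) = i - 1
      · have hji : j = (⟨i - 1, by omega⟩ : Fin (m + 2)) := Fin.ext hj2
        rw [hji]; exact he
      · by_cases hj3 : (j : ℕ) = i
        · have hji : j = (⟨i, by omega⟩ : Fin (m + 2)) := Fin.ext hj3
          rw [hji, h1.2.1, h2.2.1, he]
        · have hjm : (j : ℕ) - 2 < m := by omega
          calc b1.1 j = b1.1 ⟨(j : ℕ) - 2 + 2, by omega⟩ :=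
                path_congr b1 j.isLt (by omega) (by omega)
            _ = a.1 ⟨(j : ℕ) - 2, hjm⟩ :=
                h1.2.2 ⟨(j : ℕ) - 2, hjm⟩ (show i ≤ (j : ℕ) - 2 + 1 by omega)
            _ = b2.1 ⟨(j : ℕ) - 2 + 2, by omega⟩ :=
                (h2.2.2 ⟨(j : ℕ) - 2, hjm⟩ (show i ≤ (j : ℕ) - 2 + 1 by omega)).symm
            _ = b2.1 j := path_congr b2 (by omega) j.isLt (by omega)
  -- surjectivity: any edge starting at the right vertex can be inserted
  have hsurj : ∀ (a : GraphPath s r v₀ m) (γ : E),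
      s γ = (if h : 2 ≤ i then r (a.1 ⟨i - 2, by omega⟩) else v₀) →
      ∃ b : GraphPath s r v₀ (m + 2),
        InsProp s r v₀ rev m i hi1 hi2 a b ∧ b.1 ⟨i - 1, by omega⟩ = γ := by
    intro a γ hγ
    have hw2 : ∀ h2 : 2 ≤ i, s γ = r (a.1 ⟨i - 2, by omega⟩) := by
      intro h2
      have hγ2 := hγ
      rw [dif_pos h2] at hγ2
      exact hγ2
    have hw1 : i = 1 → s γ = v₀ := by
      intro h1
      have hγ2 := hγ
      rw [dif_neg (by omega)] at hγ2
      exact hγ2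
    have hγ' : ∀ h : i - 1 < m, s γ = s (a.1 ⟨i - 1, h⟩) := by
      intro h
      by_cases h2 : 2 ≤ i
      · rw [hw2 h2]
        exact (path_step a (by omega) (by omega) (by omega)).symm
      · obtain rfl : i = 1 := by omega
        rw [hw1 rfl]
        exact (a.2.1 (by omega)).symm
    refine ⟨⟨fun j => insEdge i m a.1 rev γ (j : ℕ), ?_, ?_⟩, ⟨?_, ?_, ?_⟩, ?_⟩
    · intro hn
      show s (insEdge i m a.1 rev γ 0) = v₀
      by_cases h2 : 2 ≤ i
      · rw [insEdge_lt (j := 0) a.1 rev γ (by omega) (by omega)]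
        exact a.2.1 (by omega)
      · rw [insEdge_cup (j := 0) a.1 rev γ (by omega)]
        exact hw1 (by omega)
    · intro k hk
      show s (insEdge i m a.1 rev γ (k + 1)) = r (insEdge i m a.1 rev γ k)
      by_cases c1 : k + 2 < i
      · rw [insEdge_lt (j := k + 1) a.1 rev γ (by omega) (by omega),
          insEdge_lt (j := k) a.1 rev γ (by omega) (by omega)]
        exact path_step a (by omega) (by omega) (by omega)
      · by_cases c2 : k + 2 = i
        · rw [insEdge_cup (j := k + 1) a.1 rev γ (by omega),
            insEdge_lt (j := k) a.1 rev γ (by omega) (by omega)]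
          rw [hw2 (by omega)]
          exact congrArg r (path_congr a (by omega) (by omega) (by omega))
        · by_cases c3 : k + 1 = i
          · rw [insEdge_cap (j := k + 1) a.1 rev γ hi1 (by omega),
              insEdge_cup (j := k) a.1 rev γ (by omega)]
            exact hsrev γ
          · by_cases c4 : k = i
            · rw [insEdge_ge (j := k + 1) a.1 rev γ (by omega) (by omega),
                insEdge_cap (j := k) a.1 rev γ hi1 c4]
              rw [hrrev γ, hγ' (by omega)]
              exact congrArg s (path_congr a (by omega) (by omega) (by omega))
            · rw [insEdge_ge (j := k + 1) a.1 rev γ (by omega) (by omega),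
                insEdge_ge (j := k) a.1 rev γ (by omega) (by omega)]
              exact path_step a (by omega) (by omega) (by omega)
    · intro k hk
      show insEdge i m a.1 rev γ (k : ℕ) = a.1 k
      exact insEdge_lt (j := (k : ℕ)) a.1 rev γ hk k.isLt
    · show insEdge i m a.1 rev γ i = rev (insEdge i m a.1 rev γ (i - 1))
      rw [insEdge_cap (j := i) a.1 rev γ hi1 rfl, insEdge_cup (j := i - 1) a.1 rev γ (by omega)]
    · intro k hk
      show insEdge i m a.1 rev γ ((k : ℕ) + 2) = a.1 k
      exact insEdge_ge (j := (k : ℕ) + 2) a.1 rev γ (by omega) (by omega)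
    · show insEdge i m a.1 rev γ (i - 1) = γ
      exact insEdge_cup (j := i - 1) a.1 rev γ (by omega)
  -- now the matrix computation
  ext α α'
  rw [Matrix.mul_apply]
  by_cases hd : α = α'
  · subst hd
    rw [Matrix.smul_apply, Matrix.one_apply_eq, smul_eq_mul, mul_one]
    have h2 : ∀ b : GraphPath s r v₀ (m + 2),
        Mcup i α b * (Mcup i)ᵀ b α =
        if InsProp s r v₀ rev m i hi1 hi2 α b
        then φ (r (b.1 ⟨i - 1, by omega⟩)) / φ (s (b.1 ⟨i - 1, by omega⟩)) else 0 := by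
      intro b
      rw [Matrix.transpose_apply]
      by_cases hb : InsProp s r v₀ rev m i hi1 hi2 α b
      · rw [if_pos hb, (key α b).1 hb]
        exact Real.mul_self_sqrt (div_nonneg (hφ _).le (hφ _).le)
      · rw [if_neg hb, (key α b).2 hb, mul_zero]
    rw [Finset.sum_congr rfl fun b _ => h2 b, Finset.sum_ite, Finset.sum_const_zero, add_zero]
    have h3 : ∑ b ∈ Finset.univ.filter (fun b => InsProp s r v₀ rev m i hi1 hi2 α b),
        φ (r (b.1 ⟨i - 1, by omega⟩)) / φ (s (b.1 ⟨i - 1, by omega⟩))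
        = ∑ γ ∈ Finset.univ.filter
            (fun γ => s γ = (if h : 2 ≤ i then r (α.1 ⟨i - 2, by omega⟩) else v₀)),
            φ (r γ) / φ (s γ) := by
      refine Finset.sum_bij (fun b _ => b.1 ⟨i - 1, by omega⟩) ?_ ?_ ?_ ?_
      · intro b hb
        simp only [Finset.mem_filter, Finset.mem_univ, true_and] at hb ⊢
        exact hedge α b hb
      · intro b1 hb1 b2 hb2 heq
        simp only [Finset.mem_filter, Finset.mem_univ, true_and] at hb1 hb2
        exact huniq α b1 b2 hb1 hb2 heq
      · intro γ hγ
        simp only [Finset.mem_filter, Finset.mem_univ, true_and] at hγ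
        obtain ⟨b, hb, hbe⟩ := hsurj α γ hγ
        exact ⟨b, by simp only [Finset.mem_filter, Finset.mem_univ, true_and]; exact hb, hbe⟩
      · intro b hb; rfl
    refine h3.trans ?_
    have h5 : ∀ γ ∈ Finset.univ.filter
        (fun γ => s γ = (if h : 2 ≤ i then r (α.1 ⟨i - 2, by omega⟩) else v₀)),
        φ (r γ) / φ (s γ)
        = φ (r γ) / φ (if h : 2 ≤ i then r (α.1 ⟨i - 2, by omega⟩) else v₀) := by
      intro γ hγ
      rw [(Finset.mem_filter.mp hγ).2]
    rw [Finset.sum_congr rfl h5, ← Finset.sum_div, hPF, mul_div_assoc, div_self (hφ _).ne',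
      mul_one]
  · rw [Matrix.smul_apply, Matrix.one_apply_ne hd, smul_zero]
    apply Finset.sum_eq_zero
    intro b _
    rw [Matrix.transpose_apply]
    by_cases hb : InsProp s r v₀ rev m i hi1 hi2 α b
    · have hb' : ¬ InsProp s r v₀ rev m i hi1 hi2 α' b := fun hb' => hd (hdet α α' b hb hb')
      rw [(key α' b).2 hb', mul_zero]
    · rw [(key α b).2 hb, zero_mul]
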